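/- For all integers n ≥ m ≥ 2, the locating chromatic number of the grid P_m □ P_n equals 4. -/

import Mathlib

open SimpleGraph

/-- The distance from a vertex to a set of vertices. -/
noncomputable def setDist {V : Type*} (G : SimpleGraph V) (v : V) (S : Set V) : ℕ :=
  sInf (G.dist v '' S)

/-- The color code of a vertex with respect to a `k`-coloring `c`:
the tuple of distances to the color classes. -/
noncomputable def colorCode {V : Type*} (G : SimpleGraph V) {k : ℕ} (c : V → Fin k)
    (v : V) : Fin k → ℕ :=
  fun i => setDist G v (c ⁻¹' {i})

/-- `c` is a locating `k`-coloring of `G`: a proper coloring onto the `k` colors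
such that distinct vertices have distinct color codes. -/
def IsLocatingColoring {V : Type*} (G : SimpleGraph V) {k : ℕ} (c : V → Fin k) : Prop :=
  Function.Surjective c ∧
  (∀ u v : V, G.Adj u v → c u ≠ c v) ∧
  Function.Injective (colorCode G c)

/-- The locating chromatic number: the least `k` admitting a locating `k`-coloring. -/
noncomputable def locatingChromaticNumber {V : Type*} (G : SimpleGraph V) : ℕ :=
  sInf {k : ℕ | ∃ c : V → Fin k, IsLocatingColoring G c}

/-- A vertex is colorful w.r.t. a coloring `c` if every color appears in its
closed neighborhood. -/
def IsColorful {V : Type*} (G : SimpleGraph V) {k : ℕ} (c : V → Fin k) (v : V) : Prop :=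
  ∀ i : Fin k, ∃ u : V, (u = v ∨ G.Adj v u) ∧ c u = i

/-! ### Auxiliary lemmas: distances in path graphs and grids -/

lemma pg_connected {N : ℕ} (hN : 0 < N) : (pathGraph N).Connected :=
  have : Nonempty (Fin N) := ⟨⟨0, hN⟩⟩
  ⟨pathGraph_preconnected N⟩

lemma pg_dist_le' : ∀ (d : ℕ) {N : ℕ} (a b : Fin N), a.val + d = b.val →
    (pathGraph N).dist a b ≤ d := by
  intro d
  induction d with
  | zero => intro N a b h; have : a = b := Fin.ext (by omega); simp [this]
  | succ d ih =>
    intro N a b h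
    have ha1 : a.val + 1 < N := by omega
    set a' : Fin N := ⟨a.val + 1, ha1⟩ with ha'
    have hadj : (pathGraph N).Adj a a' := pathGraph_adj.mpr (Or.inl rfl)
    have h2 : (pathGraph N).dist a' b ≤ d := ih a' b (by simp [ha']; omega)
    calc (pathGraph N).dist a b ≤ (pathGraph N).dist a a' + (pathGraph N).dist a' b :=
          (pg_connected (by omega)).dist_triangle
      _ ≤ 1 + d := by
          have := (SimpleGraph.dist_eq_one_iff_adj).mpr hadj
          omega
      _ = d + 1 := by omega

lemma pg_dist_le {N : ℕ} (a b : Fin N) : (pathGraph N).dist a b ≤ Nat.dist a.val b.val := by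
  rcases le_total a.val b.val with h | h
  · exact pg_dist_le' _ a b (by simp [Nat.dist]; omega)
  · rw [SimpleGraph.dist_comm]
    calc (pathGraph N).dist b a ≤ Nat.dist b.val a.val :=
          pg_dist_le' _ b a (by simp [Nat.dist]; omega)
      _ = Nat.dist a.val b.val := Nat.dist_comm _ _

lemma pg_walk_ge {N : ℕ} {a b : Fin N} (w : (pathGraph N).Walk a b) :
    Nat.dist a.val b.val ≤ w.length := by
  induction w with
  | nil => simp [Nat.dist]
  | cons h p ih =>
    rw [SimpleGraph.Walk.length_cons]
    rcases pathGraph_adj.mp h with h1 | h1 <;> simp [Nat.dist] at * <;> omega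

lemma pg_dist {N : ℕ} (a b : Fin N) : (pathGraph N).dist a b = Nat.dist a.val b.val := by
  refine le_antisymm (pg_dist_le a b) ?_
  obtain ⟨w, hw⟩ := ((pg_connected (a.pos)).preconnected a b).exists_walk_length_eq_dist
  rw [← hw]; exact pg_walk_ge w

lemma grid_walk_ge {m n : ℕ} {x y : Fin m × Fin n}
    (w : (pathGraph m □ pathGraph n).Walk x y) :
    Nat.dist x.1.val y.1.val + Nat.dist x.2.val y.2.val ≤ w.length := by
  induction w with
  | nil => simp [Nat.dist]
  | cons h p ih =>
    rw [SimpleGraph.Walk.length_cons]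
    rcases boxProd_adj.mp h with ⟨h1, h2⟩ | ⟨h1, h2⟩
    · rcases pathGraph_adj.mp h1 with h3 | h3 <;> rw [h2] at * <;> simp [Nat.dist] at * <;> omega
    · rcases pathGraph_adj.mp h1 with h3 | h3 <;> rw [h2] at * <;> simp [Nat.dist] at * <;> omega

lemma grid_dist {m n : ℕ} (x y : Fin m × Fin n) :
    (pathGraph m □ pathGraph n).dist x y
      = Nat.dist x.1.val y.1.val + Nat.dist x.2.val y.2.val := by
  have hm : 0 < m := x.1.pos
  have hn : 0 < n := x.2.pos
  have hconn : (pathGraph m □ pathGraph n).Connected :=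
    (pg_connected hm).boxProd (pg_connected hn)
  refine le_antisymm ?_ ?_
  · obtain ⟨w1, hw1⟩ := ((pg_connected hm).preconnected x.1 y.1).exists_walk_length_eq_dist
    obtain ⟨w2, hw2⟩ := ((pg_connected hn).preconnected x.2 y.2).exists_walk_length_eq_dist
    have hW : ((w1.boxProdLeft (pathGraph n) x.2).append
        (w2.boxProdRight (pathGraph m) y.1)).length = w1.length + w2.length := by
      rw [SimpleGraph.Walk.length_append]
      exact congrArg₂ (· + ·) (SimpleGraph.Walk.length_map _ _) (SimpleGraph.Walk.length_map _ _)
    calc (pathGraph m □ pathGraph n).dist x y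
        ≤ _ := SimpleGraph.dist_le ((w1.boxProdLeft (pathGraph n) x.2).append
            (w2.boxProdRight (pathGraph m) y.1))
      _ = w1.length + w2.length := hW
      _ = _ := by rw [hw1, hw2, pg_dist, pg_dist]
  · obtain ⟨w, hw⟩ := (hconn.preconnected x y).exists_walk_length_eq_dist
    rw [← hw]; exact grid_walk_ge w

/-! ### Auxiliary lemmas: set distances -/

lemma setDist_le {V : Type*} {G : SimpleGraph V} {v w : V} {S : Set V} (h : w ∈ S) :
    setDist G v S ≤ G.dist v w :=
  Nat.sInf_le ⟨w, h, rfl⟩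

lemma setDist_exists {V : Type*} {G : SimpleGraph V} (v : V) {S : Set V} (hS : S.Nonempty) :
    ∃ w ∈ S, setDist G v S = G.dist v w := by
  have : (G.dist v '' S).Nonempty := hS.image _
  obtain ⟨w, hw, he⟩ := Nat.sInf_mem this
  exact ⟨w, hw, he.symm⟩

lemma setDist_mem_zero {V : Type*} (G : SimpleGraph V) {v : V} {S : Set V} (h : v ∈ S) :
    setDist G v S = 0 :=
  Nat.eq_zero_of_le_zero (le_trans (setDist_le h) (by rw [SimpleGraph.dist_self]))

lemma setDist_singleton {V : Type*} (G : SimpleGraph V) (v w : V) :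
    setDist G v {w} = G.dist v w := by
  simp [setDist]

/-! ### The upper bound: an explicit locating 4-coloring of the grid -/

section Upper
variable (m n : ℕ) (hm : 2 ≤ m) (hn : 2 ≤ n)

def gc : Fin m × Fin n → Fin 4 := fun v =>
  if v.1.val = 0 ∧ v.2.val = 0 then 3
  else if v.1.val = m - 1 ∧ v.2.val = 0 then 2
  else ⟨(v.1.val + v.2.val) % 2, by omega⟩

include hm hn in
lemma gc_locating : IsLocatingColoring (pathGraph m □ pathGraph n) (gc m n) := by
  have hpre3 : (gc m n) ⁻¹' {3} = {(⟨0, by omega⟩, ⟨0, by omega⟩)} := by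
    ext ⟨a, b⟩
    simp only [Set.mem_preimage, Set.mem_singleton_iff, gc, Prod.ext_iff, Fin.ext_iff]
    split_ifs with h1 h2
    · simp [Fin.ext_iff]; omega
    · simp [Fin.ext_iff]; omega
    · simp [Fin.ext_iff]; omega
  have hpre2 : (gc m n) ⁻¹' {2} = {(⟨m - 1, by omega⟩, ⟨0, by omega⟩)} := by
    ext ⟨a, b⟩
    simp only [Set.mem_preimage, Set.mem_singleton_iff, gc, Prod.ext_iff, Fin.ext_iff]
    split_ifs with h1 h2
    · simp [Fin.ext_iff]; omega
    · simp [Fin.ext_iff]; omega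
    · simp [Fin.ext_iff]; omega
  refine ⟨?_, ?_, ?_⟩
  · intro i
    fin_cases i
    · exact ⟨(⟨1, by omega⟩, ⟨1, by omega⟩), by simp [gc]⟩
    · exact ⟨(⟨0, by omega⟩, ⟨1, by omega⟩), by simp [gc]⟩
    · exact ⟨(⟨m - 1, by omega⟩, ⟨0, by omega⟩), by simp [gc]; omega⟩
    · exact ⟨(⟨0, by omega⟩, ⟨0, by omega⟩), by simp [gc]⟩
  · rintro ⟨a, b⟩ ⟨a', b'⟩ hadj
    have hv : Nat.dist a.val a'.val + Nat.dist b.val b'.val = 1 := by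
      rcases boxProd_adj.mp hadj with ⟨h1, h2⟩ | ⟨h1, h2⟩
      · have h1' : (pathGraph m).Adj a a' := h1
        have h2' : b.val = b'.val := congrArg Fin.val h2
        rcases pathGraph_adj.mp h1' with h3 | h3 <;> simp [Nat.dist] <;> omega
      · have h1' : (pathGraph n).Adj b b' := h1
        have h2' : a.val = a'.val := congrArg Fin.val h2
        rcases pathGraph_adj.mp h1' with h3 | h3 <;> simp [Nat.dist] <;> omega
    simp only [gc, Fin.ext_iff, ne_eq]
    have ha := a.isLt; have ha' := a'.isLt; have hb := b.isLt; have hb' := b'.isLt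
    simp only [Nat.dist] at hv
    split_ifs <;> simp [Fin.ext_iff] <;> omega
  · intro u v h
    have h3 := congrFun h 3
    have h2 := congrFun h 2
    simp only [colorCode, hpre3, hpre2, setDist_singleton, grid_dist] at h3 h2
    simp only [Nat.dist] at h3 h2
    have := u.1.isLt; have := u.2.isLt; have := v.1.isLt; have := v.2.isLt
    have e1 : u.1.val = v.1.val := by omega
    have e2 : u.2.val = v.2.val := by omega
    exact Prod.ext (Fin.ext e1) (Fin.ext e2)
end Upper

/-! ### The lower bound -/

section Lower
variable {m n : ℕ}

lemma grid_setDist_eq_one {v w : Fin m × Fin n} {S : Set (Fin m × Fin n)} (hw : w ∈ S)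
    (hd : (pathGraph m □ pathGraph n).dist v w = 1) (hv : v ∉ S) :
    setDist (pathGraph m □ pathGraph n) v S = 1 := by
  refine le_antisymm (hd ▸ setDist_le hw) ?_
  obtain ⟨u, hu, he⟩ := setDist_exists v ⟨w, hw⟩
  rw [he, grid_dist]
  have hne : v ≠ u := fun h => hv (h ▸ hu)
  have hval : ¬(v.1.val = u.1.val ∧ v.2.val = u.2.val) := by
    rintro ⟨h1, h2⟩; exact hne (Prod.ext (Fin.ext h1) (Fin.ext h2))
  simp only [Nat.dist]; omega

lemma no_loc_small (hm : 2 ≤ m) (hn : 2 ≤ n) (k : ℕ) (hk : k ≤ 1)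
    (c : Fin m × Fin n → Fin k)
    (hc : IsLocatingColoring (pathGraph m □ pathGraph n) c) : False := by
  have a12 : (pathGraph m □ pathGraph n).Adj
      ((⟨0, by omega⟩ : Fin m), (⟨0, by omega⟩ : Fin n)) (⟨1, by omega⟩, ⟨0, by omega⟩) :=
    boxProd_adj.mpr (Or.inl ⟨pathGraph_adj.mpr (Or.inl rfl), rfl⟩)
  have := hc.2.1 _ _ a12
  apply this
  apply Fin.ext
  have h1 := (c ((⟨0, by omega⟩ : Fin m), (⟨0, by omega⟩ : Fin n))).isLt
  have h2 := (c ((⟨1, by omega⟩ : Fin m), (⟨0, by omega⟩ : Fin n))).isLt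
  omega

lemma no_loc2 (hm : 2 ≤ m) (hn : 2 ≤ n) (c : Fin m × Fin n → Fin 2)
    (hc : IsLocatingColoring (pathGraph m □ pathGraph n) c) : False := by
  obtain ⟨hsurj, hprop, hinj⟩ := hc
  have key : ∀ w : Fin m × Fin n,
      colorCode (pathGraph m □ pathGraph n) c w = fun i => if i = c w then 0 else 1 := by
    intro w
    funext i
    by_cases hi : i = c w
    · subst hi
      simp only [colorCode, if_pos rfl]
      exact setDist_mem_zero _ (show w ∈ c ⁻¹' {c w} from rfl)
    · obtain ⟨u', hadj⟩ : ∃ u', (pathGraph m □ pathGraph n).Adj w u' := by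
        by_cases h : w.1.val + 1 < m
        · refine ⟨(⟨w.1.val + 1, h⟩, w.2), boxProd_adj.mpr (Or.inl ⟨?_, rfl⟩)⟩
          exact pathGraph_adj.mpr (Or.inl rfl)
        · have h1 : 1 ≤ w.1.val := by have := w.1.isLt; omega
          refine ⟨(⟨w.1.val - 1, by omega⟩, w.2), boxProd_adj.mpr (Or.inl ⟨?_, rfl⟩)⟩
          exact pathGraph_adj.mpr (Or.inr (by simp; omega))
      have hcu : c u' = i := by
        have hne := hprop _ _ hadj
        apply Fin.ext
        have b1 := (c u').isLt; have b2 := (c w).isLt; have b3 := i.isLt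
        have e1 : (c w).val ≠ (c u').val := fun h => hne (Fin.ext h)
        have e2 : i.val ≠ (c w).val := fun h => hi (Fin.ext h)
        omega
      have hd : (pathGraph m □ pathGraph n).dist w u' = 1 :=
        SimpleGraph.dist_eq_one_iff_adj.mpr hadj
      simp only [colorCode, if_neg hi]
      exact grid_setDist_eq_one (show u' ∈ c ⁻¹' {i} from hcu) hd
        (show w ∉ c ⁻¹' {i} from fun hs => hi (Eq.symm hs))
  set p1 : Fin m × Fin n := (⟨0, by omega⟩, ⟨0, by omega⟩) with hp1
  set p2 : Fin m × Fin n := (⟨0, by omega⟩, ⟨1, by omega⟩) with hp2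
  set p3 : Fin m × Fin n := (⟨1, by omega⟩, ⟨0, by omega⟩) with hp3
  have code_eq : ∀ u v : Fin m × Fin n, c u = c v → u = v := by
    intro u v huv
    apply hinj
    rw [key u, key v, huv]
  have b1 := (c p1).isLt; have b2 := (c p2).isLt; have b3 := (c p3).isLt
  have : (c p1).val = (c p2).val ∨ (c p1).val = (c p3).val ∨ (c p2).val = (c p3).val := by
    omega
  rcases this with h | h | h
  · have := code_eq p1 p2 (Fin.ext h)
    rw [hp1, hp2] at this
    exact absurd (congrArg (fun p => p.2.val) this) (by simp)
  · have := code_eq p1 p3 (Fin.ext h)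
    rw [hp1, hp3] at this
    exact absurd (congrArg (fun p => p.1.val) this) (by simp)
  · have := code_eq p2 p3 (Fin.ext h)
    rw [hp2, hp3] at this
    exact absurd (congrArg (fun p => p.1.val) this) (by simp)

variable (hm : 2 ≤ m) (hn : 2 ≤ n) {c : Fin m × Fin n → Fin 3}
  (hc : IsLocatingColoring (pathGraph m □ pathGraph n) c)

set_option linter.unusedSectionVars false

include hm hn hc in
lemma loc3_step (x y : ℕ) (hx : x + 1 < m) (hy : y + 1 < n) :
    c (⟨x, by omega⟩, ⟨y, by omega⟩) = c (⟨x + 1, hx⟩, ⟨y + 1, hy⟩) := by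
  obtain ⟨hsurj, hprop, hinj⟩ := hc
  set u1 : Fin m × Fin n := (⟨x, by omega⟩, ⟨y, by omega⟩) with hu1
  set u2 : Fin m × Fin n := (⟨x + 1, hx⟩, ⟨y, by omega⟩) with hu2
  set u3 : Fin m × Fin n := (⟨x + 1, hx⟩, ⟨y + 1, hy⟩) with hu3
  set u4 : Fin m × Fin n := (⟨x, by omega⟩, ⟨y + 1, hy⟩) with hu4
  by_contra h13
  have a12 : (pathGraph m □ pathGraph n).Adj u1 u2 :=
    boxProd_adj.mpr (Or.inl ⟨pathGraph_adj.mpr (Or.inl rfl), rfl⟩)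
  have a23 : (pathGraph m □ pathGraph n).Adj u2 u3 :=
    boxProd_adj.mpr (Or.inr ⟨pathGraph_adj.mpr (Or.inl rfl), rfl⟩)
  have a34 : (pathGraph m □ pathGraph n).Adj u3 u4 :=
    boxProd_adj.mpr (Or.inl ⟨pathGraph_adj.mpr (Or.inr rfl), rfl⟩)
  have a41 : (pathGraph m □ pathGraph n).Adj u4 u1 :=
    boxProd_adj.mpr (Or.inr ⟨pathGraph_adj.mpr (Or.inr rfl), rfl⟩)
  have n12 := hprop _ _ a12
  have n23 := hprop _ _ a23
  have n34 := hprop _ _ a34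
  have n41 := hprop _ _ a41
  have h24 : c u2 = c u4 := by
    refine Fin.ext ?_
    have b1 := (c u1).isLt; have b2 := (c u2).isLt
    have b3 := (c u3).isLt; have b4 := (c u4).isLt
    have e13 : (c u1).val ≠ (c u3).val := fun h => h13 (Fin.ext h)
    have e12 : (c u1).val ≠ (c u2).val := fun h => n12 (Fin.ext h)
    have e23 : (c u2).val ≠ (c u3).val := fun h => n23 (Fin.ext h)
    have e34 : (c u3).val ≠ (c u4).val := fun h => n34 (Fin.ext h)
    have e41 : (c u4).val ≠ (c u1).val := fun h => n41 (Fin.ext h)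
    omega
  have hne : u2 ≠ u4 := by
    intro h
    have := congrArg (fun p => p.1.val) h
    rw [hu2, hu4] at this
    simp at this
  apply hne (hinj ?_)
  funext i
  have hiv : i = c u1 ∨ i = c u2 ∨ i = c u3 := by
    have b0 := i.isLt
    have b1 := (c u1).isLt; have b2 := (c u2).isLt; have b3 := (c u3).isLt
    have e13 : (c u1).val ≠ (c u3).val := fun h => h13 (Fin.ext h)
    have e12 : (c u1).val ≠ (c u2).val := fun h => n12 (Fin.ext h)
    have e23 : (c u2).val ≠ (c u3).val := fun h => n23 (Fin.ext h)
    have : i.val = (c u1).val ∨ i.val = (c u2).val ∨ i.val = (c u3).val := by omega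
    rcases this with h | h | h
    exacts [Or.inl (Fin.ext h), Or.inr (Or.inl (Fin.ext h)), Or.inr (Or.inr (Fin.ext h))]
  have d21 : (pathGraph m □ pathGraph n).dist u2 u1 = 1 := by
    rw [grid_dist, hu1, hu2]; simp [Nat.dist]
  have d41 : (pathGraph m □ pathGraph n).dist u4 u1 = 1 := by
    rw [grid_dist, hu1, hu4]; simp [Nat.dist]
  have d23 : (pathGraph m □ pathGraph n).dist u2 u3 = 1 := by
    rw [grid_dist, hu3, hu2]; simp [Nat.dist]
  have d43 : (pathGraph m □ pathGraph n).dist u4 u3 = 1 := by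
    rw [grid_dist, hu3, hu4]; simp [Nat.dist]
  rcases hiv with hi | hi | hi <;> subst hi <;> simp only [colorCode]
  · rw [grid_setDist_eq_one (show u1 ∈ c ⁻¹' {c u1} from rfl) d21
        (show u2 ∉ c ⁻¹' {c u1} from fun hs => n12 (Eq.symm hs)),
      grid_setDist_eq_one (show u1 ∈ c ⁻¹' {c u1} from rfl) d41
        (show u4 ∉ c ⁻¹' {c u1} from fun hs => n41 hs)]
  · rw [setDist_mem_zero _ (show u2 ∈ c ⁻¹' {c u2} from rfl),
      setDist_mem_zero _ (show u4 ∈ c ⁻¹' {c u2} from h24.symm)]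
  · rw [grid_setDist_eq_one (show u3 ∈ c ⁻¹' {c u3} from rfl) d23
        (show u2 ∉ c ⁻¹' {c u3} from fun hs => n23 hs),
      grid_setDist_eq_one (show u3 ∈ c ⁻¹' {c u3} from rfl) d43
        (show u4 ∉ c ⁻¹' {c u3} from fun hs => n34 (Eq.symm hs))]

include hm hn hc in
lemma loc3_step' (u v : Fin m × Fin n) (h1 : v.1.val = u.1.val + 1)
    (h2 : v.2.val = u.2.val + 1) : c u = c v := by
  have key := loc3_step hm hn hc u.1.val u.2.val (by omega) (by omega)
  have e1 : u = (⟨u.1.val, by omega⟩, (⟨u.2.val, by omega⟩ : Fin n)) :=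
    Prod.ext (Fin.ext rfl) (Fin.ext rfl)
  have e2 : v = (⟨u.1.val + 1, by omega⟩, (⟨u.2.val + 1, by omega⟩ : Fin n)) :=
    Prod.ext (Fin.ext h1) (Fin.ext h2)
  exact ((congrArg c e1).trans key).trans (congrArg c e2).symm

include hm hn hc in
lemma loc3_diag : ∀ (k : ℕ) (u v : Fin m × Fin n), v.1.val = u.1.val + k →
    v.2.val = u.2.val + k → c u = c v := by
  intro k
  induction k with
  | zero =>
    intro u v h1 h2
    have : u = v := Prod.ext (Fin.ext (by omega)) (Fin.ext (by omega))
    rw [this]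
  | succ k ih =>
    intro u v h1 h2
    have hb1 : u.1.val + 1 < m := by have := v.1.isLt; omega
    have hb2 : u.2.val + 1 < n := by have := v.2.isLt; omega
    set w : Fin m × Fin n := (⟨u.1.val + 1, hb1⟩, ⟨u.2.val + 1, hb2⟩) with hw
    have h0 : c u = c w := loc3_step' hm hn hc u w rfl rfl
    rw [h0]
    exact ih w v (by rw [hw]; simp; omega) (by rw [hw]; simp; omega)

include hm hn hc in
lemma loc3_diag' (u v : Fin m × Fin n) (h : u.1.val + v.2.val = v.1.val + u.2.val) :
    c u = c v := by
  rcases le_total u.1.val v.1.val with hle | hle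
  · exact loc3_diag hm hn hc (v.1.val - u.1.val) u v (by omega) (by omega)
  · exact (loc3_diag hm hn hc (u.1.val - v.1.val) v u (by omega) (by omega)).symm

include hm hn in
omit hc in
lemma no_loc3 (c : Fin m × Fin n → Fin 3)
    (hc : IsLocatingColoring (pathGraph m □ pathGraph n) c) : False := by
  set v0 : Fin m × Fin n := (⟨0, by omega⟩, ⟨0, by omega⟩) with hv0
  set v1 : Fin m × Fin n := (⟨1, by omega⟩, ⟨1, by omega⟩) with hv1
  have hne : v0 ≠ v1 := by
    intro h
    have := congrArg (fun p => p.1.val) h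
    rw [hv0, hv1] at this
    simp at this
  have hcol : c v0 = c v1 := loc3_diag' hm hn hc v0 v1 (by rw [hv0, hv1]; simp)
  apply hne (hc.2.2 ?_)
  funext i
  simp only [colorCode]
  by_cases hi : i = c v0
  · subst hi
    rw [setDist_mem_zero _ (show v0 ∈ c ⁻¹' {c v0} from rfl),
      setDist_mem_zero _ (show v1 ∈ c ⁻¹' {c v0} from hcol.symm)]
  · obtain ⟨w0, hw0⟩ := hc.1 i
    have hSne : (c ⁻¹' {i}).Nonempty := ⟨w0, hw0⟩
    apply le_antisymm
    · obtain ⟨w, hw, he⟩ := setDist_exists v1 hSne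
      rw [he]
      rcases le_total w.2.val w.1.val with hab | hab
      · have hb : w.1.val - w.2.val < m := by have := w.1.isLt; omega
        set w' : Fin m × Fin n := (⟨w.1.val - w.2.val, hb⟩, ⟨0, by omega⟩) with hw'
        have hcw : c w' = c w := loc3_diag' hm hn hc w' w (by rw [hw']; simp; omega)
        have hmem : w' ∈ c ⁻¹' {i} := by
          have : c w' = i := hcw.trans hw
          exact this
        calc setDist (pathGraph m □ pathGraph n) v0 (c ⁻¹' {i})
            ≤ (pathGraph m □ pathGraph n).dist v0 w' := setDist_le hmem
          _ ≤ (pathGraph m □ pathGraph n).dist v1 w := by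
              rw [grid_dist, grid_dist, hv0, hv1, hw']
              simp only [Nat.dist]; omega
      · have hb : w.2.val - w.1.val < n := by have := w.2.isLt; omega
        set w' : Fin m × Fin n := (⟨0, by omega⟩, ⟨w.2.val - w.1.val, hb⟩) with hw'
        have hcw : c w' = c w := loc3_diag' hm hn hc w' w (by rw [hw']; simp; omega)
        have hmem : w' ∈ c ⁻¹' {i} := by
          have : c w' = i := hcw.trans hw
          exact this
        calc setDist (pathGraph m □ pathGraph n) v0 (c ⁻¹' {i})
            ≤ (pathGraph m □ pathGraph n).dist v0 w' := setDist_le hmem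
          _ ≤ (pathGraph m □ pathGraph n).dist v1 w := by
              rw [grid_dist, grid_dist, hv0, hv1, hw']
              simp only [Nat.dist]; omega
    · obtain ⟨w, hw, he⟩ := setDist_exists v0 hSne
      rw [he]
      have hwne : w ≠ v0 := by
        intro h
        exact hi ((hw.symm.trans (congrArg c h)).symm ▸ rfl)
      have hval : ¬(w.1.val = 0 ∧ w.2.val = 0) := by
        rintro ⟨h1, h2⟩
        exact hwne (Prod.ext (Fin.ext (by rw [hv0]; exact h1)) (Fin.ext (by rw [hv0]; exact h2)))
      calc setDist (pathGraph m □ pathGraph n) v1 (c ⁻¹' {i})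
          ≤ (pathGraph m □ pathGraph n).dist v1 w := setDist_le hw
        _ ≤ (pathGraph m □ pathGraph n).dist v0 w := by
            rw [grid_dist, grid_dist, hv0, hv1]
            simp only [Nat.dist]; omega
end Lower

/-- For all `n ≥ m ≥ 2`, the locating chromatic number of the grid
`P_m □ P_n` equals `4`. -/
theorem stmt3 (m n : ℕ) (hm : 2 ≤ m) (hmn : m ≤ n) :
    locatingChromaticNumber (pathGraph m □ pathGraph n) = 4 := by
  have hn : 2 ≤ n := hm.trans hmn
  have hmem : 4 ∈ {k : ℕ | ∃ c : Fin m × Fin n → Fin k,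
      IsLocatingColoring (pathGraph m □ pathGraph n) c} :=
    ⟨gc m n, gc_locating m n hm hn⟩
  unfold locatingChromaticNumber
  refine le_antisymm (Nat.sInf_le hmem) ?_
  apply le_csInf ⟨4, hmem⟩
  rintro k ⟨c, hc⟩
  by_contra hlt
  push_neg at hlt
  interval_cases k
  · exact no_loc_small hm hn 0 (by omega) c hc
  · exact no_loc_small hm hn 1 (by omega) c hc
  · exact no_loc2 hm hn c hc
  · exact no_loc3 hm hn c hc
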